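/- arXiv:2201.04758 — 3 statements merged into one kernel-verified Lean document; each statement's English description precedes it below -/
import Mathlib

section
/- Let χ : ℝ → ℝ be twice continuously differentiable, supported in [−1,1], with χ = 1 on [−1/2,1/2] and 0 ≤ χ ≤ 1. For x, y ∈ ℝ define k(x,y) = sgn(x)·sgn(y)·∫₀^∞ χ(λ)·F₊′(λ|x|)·( F₊′(λ|y|) − F₋′(λ|y|) ) dλ, where F₊′(s) = −e^{is} + e^{−s} and F₋′(s) = −e^{−is} + e^{−s}; the integral converges absolutely. Then there exists a constant C > 0 such that for all x, y ∈ ℝ, |k(x,y) − g(x,y)| ≤ C·(1+(|x|−|y|)²)^{−1}, where g(x,y) = sgn(x)·sgn(y)·[ i·𝟙{|x|+|y| ≥ 1}·(|x|+|y|)^{−1} − i·𝟙{| |x|−|y| | ≥ 1}·(|x|−|y|)^{−1} + 𝟙{| |x|−|y| | ≥ 1}·( (|x|+i|y|)^{−1} − (|x|−i|y|)^{−1} ) ]. -/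
open MeasureTheory

/-- `F₊'(s) = -e^{is} + e^{-s}`, the derivative of `F₊(s) = i e^{is} - e^{-s}`. -/
noncomputable def FplusD (s : ℝ) : ℂ :=
  -Complex.exp (Complex.I * (s : ℂ)) + Complex.exp (-(s : ℂ))

/-- `F₋'(s) = -e^{-is} + e^{-s}`, the derivative of `F₋(s) = -i e^{-is} - e^{-s}`. -/
noncomputable def FminusD (s : ℝ) : ℂ :=
  -Complex.exp (-(Complex.I * (s : ℂ))) + Complex.exp (-(s : ℂ))

/-- The translation-invariant model kernel
`k⁰₁(x,y) = sgn x · sgn y · ∫₀^∞ χ(λ) F₊'(λ|x|) (F₊'(λ|y|) - F₋'(λ|y|)) dλ`. -/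
noncomputable def k01 (χ : ℝ → ℝ) (x y : ℝ) : ℂ :=
  (Real.sign x : ℂ) * (Real.sign y : ℂ) *
    ∫ l in Set.Ioi (0:ℝ), (χ l : ℂ) * FplusD (l * |x|) * (FplusD (l * |y|) - FminusD (l * |y|))

/-- The singular part `g₄⁻` of `k⁰₁`. -/
noncomputable def g4minus (x y : ℝ) : ℂ :=
  (Real.sign x : ℂ) * (Real.sign y : ℂ) *
    (Complex.I * (if 1 ≤ |x| + |y| then ((|x| + |y| : ℝ) : ℂ)⁻¹ else 0)
      - Complex.I * (if 1 ≤ |(|x| - |y|)| then ((|x| - |y| : ℝ) : ℂ)⁻¹ else 0)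
      + (if 1 ≤ |(|x| - |y|)| then
            (((|x| : ℝ) : ℂ) + Complex.I * ((|y| : ℝ) : ℂ))⁻¹ -
              (((|x| : ℝ) : ℂ) - Complex.I * ((|y| : ℝ) : ℂ))⁻¹
          else 0))

lemma helper_int (f : ℝ → ℂ) (hc : Continuous f) (h0 : ∀ l : ℝ, 1 < l → f l = 0) :
    IntegrableOn f (Set.Ioi 0) := by
  have h1 : IntegrableOn f (Set.Ioc 0 2) := hc.integrableOn_Ioc
  have h2 : IntegrableOn f (Set.Ioi 2) := by
    refine (integrableOn_congr_fun (fun l hl => (h0 l (by linarith [Set.mem_Ioi.mp hl])).symm)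
      measurableSet_Ioi).mp ?_
    exact integrableOn_zero
  rw [show Set.Ioi (0:ℝ) = Set.Ioc 0 2 ∪ Set.Ioi 2 from
    (Set.Ioc_union_Ioi_eq_Ioi (by norm_num)).symm]
  exact h1.union h2

lemma helper_eq (f : ℝ → ℂ) (hc : Continuous f) (h0 : ∀ l : ℝ, 1 < l → f l = 0) :
    ∫ l in Set.Ioi (0:ℝ), f l = ∫ l in (0:ℝ)..2, f l := by
  rw [intervalIntegral.integral_of_le (by norm_num : (0:ℝ) ≤ 2)]
  rw [show Set.Ioi (0:ℝ) = Set.Ioc 0 2 ∪ Set.Ioi 2 from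
    (Set.Ioc_union_Ioi_eq_Ioi (by norm_num)).symm]
  have hdisj : Disjoint (Set.Ioc (0:ℝ) 2) (Set.Ioi 2) := by
    rw [Set.disjoint_left]
    intro x h1 h2
    exact absurd h1.2 (not_le.mpr h2)
  rw [setIntegral_union hdisj measurableSet_Ioi
    hc.integrableOn_Ioc ((integrableOn_congr_fun
      (fun l hl => (h0 l (by linarith [Set.mem_Ioi.mp hl])).symm)
      measurableSet_Ioi).mp integrableOn_zero)]
  rw [setIntegral_congr_fun measurableSet_Ioi (fun l hl => h0 l (by linarith [Set.mem_Ioi.mp hl]))]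
  simp

lemma chi_smooth (χ : ℝ → ℝ) (hχ : ContDiff ℝ 2 χ) :
    Differentiable ℝ χ ∧ Differentiable ℝ (deriv χ) ∧ Continuous (deriv χ)
      ∧ Continuous (deriv (deriv χ)) := by
  have h2 : ContDiff ℝ ((1 : ℕ) + 1) χ := by exact_mod_cast hχ
  rw [contDiff_succ_iff_deriv] at h2
  obtain ⟨hd, -, hc1⟩ := h2
  have hc1' : ContDiff ℝ 1 (deriv χ) := by exact_mod_cast hc1
  rw [contDiff_one_iff_deriv] at hc1'
  exact ⟨hd, hc1'.1, hc1'.1.continuous, hc1'.2⟩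

set_option maxHeartbeats 1000000 in
lemma ibp_lemma (χ : ℝ → ℝ) (hχ : ContDiff ℝ 2 χ) (hχ0 : χ 0 = 1) (hχ2 : χ 2 = 0)
    (hd0 : deriv χ 0 = 0) (hd2 : deriv χ 2 = 0) (w : ℂ) (hw : w ≠ 0) :
    ∫ l in (0:ℝ)..2, (χ l : ℂ) * Complex.exp (w * l)
      = -w⁻¹ + w⁻¹ * w⁻¹ * ∫ l in (0:ℝ)..2, ((deriv (deriv χ) l : ℝ) : ℂ) * Complex.exp (w * l) := by
  obtain ⟨hd1, hd2', hc1, hc2⟩ := chi_smooth χ hχ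
  have hexp : ∀ l : ℝ, HasDerivAt (fun l : ℝ => Complex.exp (w * l)) (Complex.exp (w * l) * w) l := by
    intro l
    have h1 : HasDerivAt (fun l : ℝ => ((l : ℝ) : ℂ)) 1 l := (hasDerivAt_id l).ofReal_comp
    have h3 := (h1.const_mul w).cexp
    simpa using h3
  have hv : ∀ l : ℝ, HasDerivAt (fun l : ℝ => w⁻¹ * Complex.exp (w * l)) (Complex.exp (w * l)) l := by
    intro l
    have := (hexp l).const_mul w⁻¹
    rw [show w⁻¹ * (Complex.exp (w * l) * w) = Complex.exp (w * l) from by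
      rw [mul_comm, mul_assoc, mul_inv_cancel₀ hw, mul_one]] at this
    exact this
  have hcexp : Continuous fun l : ℝ => Complex.exp (w * l) := by
    exact Complex.continuous_exp.comp (continuous_const.mul Complex.continuous_ofReal)
  have e1 : ∀ g : ℝ → ℝ, ∫ l in (0:ℝ)..2, (g l : ℂ) * (w⁻¹ * Complex.exp (w * l))
      = w⁻¹ * ∫ l in (0:ℝ)..2, (g l : ℂ) * Complex.exp (w * l) := by
    intro g
    rw [← intervalIntegral.integral_const_mul]
    congr 1; ext l; ring
  have ibp1 := intervalIntegral.integral_mul_deriv_eq_deriv_mul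
    (u := fun l : ℝ => (χ l : ℂ)) (u' := fun l : ℝ => ((deriv χ l : ℝ) : ℂ))
    (v := fun l : ℝ => w⁻¹ * Complex.exp (w * l)) (v' := fun l : ℝ => Complex.exp (w * l))
    (fun l _ => ((hd1 l).hasDerivAt).ofReal_comp) (fun l _ => hv l)
    ((Complex.continuous_ofReal.comp hc1).intervalIntegrable 0 2)
    (hcexp.intervalIntegrable 0 2)
  have ibp2 := intervalIntegral.integral_mul_deriv_eq_deriv_mul
    (u := fun l : ℝ => ((deriv χ l : ℝ) : ℂ)) (u' := fun l : ℝ => ((deriv (deriv χ) l : ℝ) : ℂ))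
    (v := fun l : ℝ => w⁻¹ * Complex.exp (w * l)) (v' := fun l : ℝ => Complex.exp (w * l))
    (fun l _ => ((hd2' l).hasDerivAt).ofReal_comp) (fun l _ => hv l)
    ((Complex.continuous_ofReal.comp hc2).intervalIntegrable 0 2)
    (hcexp.intervalIntegrable 0 2)
  rw [e1] at ibp1 ibp2
  rw [ibp1, ibp2]
  simp only [hχ0, hχ2, hd0, hd2, Complex.ofReal_zero, Complex.ofReal_one, zero_mul, mul_zero,
    Complex.exp_zero, one_mul, mul_one, sub_zero, zero_sub]
  ring

lemma expand_pt (l a b : ℝ) :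
    FplusD (l*a) * (FplusD (l*b) - FminusD (l*b)) =
      Complex.exp ((Complex.I*((a:ℂ)+b))*l) - Complex.exp ((Complex.I*((a:ℂ)-b))*l)
      - Complex.exp ((-(a:ℂ)+Complex.I*b)*l) + Complex.exp ((-(a:ℂ)-Complex.I*b)*l) := by
  simp only [FplusD, FminusD]
  push_cast
  rw [show (Complex.I*((a:ℂ)+(b:ℂ)))*(l:ℂ) = Complex.I*((l:ℂ)*a) + Complex.I*((l:ℂ)*b) from by ring,
      show (Complex.I*((a:ℂ)-(b:ℂ)))*(l:ℂ) = Complex.I*((l:ℂ)*a) + -(Complex.I*((l:ℂ)*b)) from by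
        ring,
      show (-(a:ℂ)+Complex.I*(b:ℂ))*(l:ℂ) = -((l:ℂ)*a) + Complex.I*((l:ℂ)*b) from by ring,
      show (-(a:ℂ)-Complex.I*(b:ℂ))*(l:ℂ) = -((l:ℂ)*a) + -(Complex.I*((l:ℂ)*b)) from by ring,
      Complex.exp_add, Complex.exp_add, Complex.exp_add, Complex.exp_add]
  ring

set_option maxHeartbeats 2000000 in
/-- The asymptotic formula `k⁰₁ = g₄⁻ + O(⟨|x|-|y|⟩⁻²)` used in the `H¹ → L¹` bound for
`T_{K⁰₁}`; the integral defining `k⁰₁` converges absolutely. -/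
theorem stmt16 (χ : ℝ → ℝ) (hχ : ContDiff ℝ 2 χ)
    (hχsupp : Function.support χ ⊆ Set.Icc (-1) 1)
    (hχone : ∀ x ∈ Set.Icc (-(1:ℝ)/2) (1/2), χ x = 1)
    (hχbd : ∀ x : ℝ, 0 ≤ χ x ∧ χ x ≤ 1) :
    (∀ x y : ℝ,
      IntegrableOn
        (fun l : ℝ => (χ l : ℂ) * FplusD (l * |x|) * (FplusD (l * |y|) - FminusD (l * |y|)))
        (Set.Ioi 0)) ∧
    ∃ C > 0, ∀ x y : ℝ,
      ‖k01 χ x y - g4minus x y‖ ≤ C * (1 + (|x| - |y|) ^ 2)⁻¹ := by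
  have hχc : Continuous χ := hχ.continuous
  have hχ1 : ∀ l : ℝ, 1 < l → χ l = 0 := by
    intro l hl
    by_contra h
    have := hχsupp (Function.mem_support.mpr h)
    rw [Set.mem_Icc] at this
    linarith [this.2]
  have hFpc : Continuous FplusD := by
    unfold FplusD
    exact ((Complex.continuous_exp.comp (continuous_const.mul Complex.continuous_ofReal)).neg).add
      (Complex.continuous_exp.comp Complex.continuous_ofReal.neg)
  have hFmc : Continuous FminusD := by
    unfold FminusD
    exact ((Complex.continuous_exp.comp
      (continuous_const.mul Complex.continuous_ofReal).neg).neg).add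
      (Complex.continuous_exp.comp Complex.continuous_ofReal.neg)
  have hintc : ∀ a b : ℝ, Continuous
      (fun l : ℝ => (χ l : ℂ) * FplusD (l * a) * (FplusD (l * b) - FminusD (l * b))) := by
    intro a b
    apply Continuous.mul
    · exact (Complex.continuous_ofReal.comp hχc).mul (hFpc.comp (continuous_id.mul continuous_const))
    · exact ((hFpc.comp (continuous_id.mul continuous_const)).sub
        (hFmc.comp (continuous_id.mul continuous_const)))
  have hint : ∀ x y : ℝ, IntegrableOn
      (fun l : ℝ => (χ l : ℂ) * FplusD (l * |x|) * (FplusD (l * |y|) - FminusD (l * |y|)))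
      (Set.Ioi 0) := by
    intro x y
    exact helper_int _ (hintc _ _) (fun l hl => by rw [hχ1 l hl]; simp)
  refine ⟨hint, ?_⟩
  -- bound on the second derivative
  obtain ⟨hd1, hd2', hc1, hc2⟩ := chi_smooth χ hχ
  obtain ⟨M0, hM0⟩ := (isCompact_Icc (a := (0:ℝ)) (b := 2)).exists_bound_of_continuousOn
    hc2.continuousOn
  set M : ℝ := max M0 0 with hM_def
  have hM : 0 ≤ M := le_max_right _ _
  have hM' : ∀ l ∈ Set.Icc (0:ℝ) 2, |deriv (deriv χ) l| ≤ M :=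
    fun l hl => le_trans (hM0 l hl) (le_max_left _ _)
  -- boundary values
  have hχ0 : χ 0 = 1 := hχone 0 (by norm_num)
  have hχ2 : χ 2 = 0 := hχ1 2 (by norm_num)
  have hder0 : deriv χ 0 = 0 := by
    have hev : χ =ᶠ[nhds 0] fun _ => 1 := by
      filter_upwards [Ioo_mem_nhds (by norm_num : -(1:ℝ)/2 < 0) (by norm_num : (0:ℝ) < 1/2)]
        with t ht
      exact hχone t ⟨le_of_lt ht.1, le_of_lt ht.2⟩
    rw [hev.deriv_eq, deriv_const]
  have hder2 : deriv χ 2 = 0 := by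
    have hev : χ =ᶠ[nhds 2] fun _ => 0 := by
      filter_upwards [Ioi_mem_nhds (by norm_num : (1:ℝ) < 2)] with t ht
      exact hχ1 t ht
    rw [hev.deriv_eq, deriv_const]
  -- the basic exponential integrals
  set F : ℂ → ℂ := fun w => ∫ l in Set.Ioi (0:ℝ), (χ l : ℂ) * Complex.exp (w * l) with hF_def
  have hcw : ∀ w : ℂ, Continuous fun l : ℝ => (χ l : ℂ) * Complex.exp (w * l) := by
    intro w
    exact (Complex.continuous_ofReal.comp hχc).mul
      (Complex.continuous_exp.comp (continuous_const.mul Complex.continuous_ofReal))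
  have hzw : ∀ w : ℂ, ∀ l : ℝ, 1 < l → (χ l : ℂ) * Complex.exp (w * l) = 0 := by
    intro w l hl; rw [hχ1 l hl]; simp
  have hintw : ∀ w : ℂ, IntegrableOn (fun l : ℝ => (χ l : ℂ) * Complex.exp (w * l))
      (Set.Ioi 0) := fun w => helper_int _ (hcw w) (hzw w)
  have hexp_le : ∀ w : ℂ, w.re ≤ 0 → ∀ l : ℝ, 0 ≤ l → ‖Complex.exp (w * l)‖ ≤ 1 := by
    intro w hw l hl
    rw [Complex.norm_exp, Real.exp_le_one_iff]
    simp only [Complex.mul_re, Complex.ofReal_re, Complex.ofReal_im, mul_zero, sub_zero]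
    exact mul_nonpos_of_nonpos_of_nonneg hw hl
  -- crude bound
  have hFbd : ∀ w : ℂ, w.re ≤ 0 → ‖F w‖ ≤ 2 := by
    intro w hw
    rw [hF_def]
    simp only
    rw [helper_eq _ (hcw w) (hzw w)]
    have := intervalIntegral.norm_integral_le_of_norm_le_const
      (C := 1) (f := fun l : ℝ => (χ l : ℂ) * Complex.exp (w * l)) (a := 0) (b := 2) ?_
    · calc ‖∫ l in (0:ℝ)..2, (χ l : ℂ) * Complex.exp (w * l)‖ ≤ 1 * |2 - 0| := this
        _ ≤ 2 := by norm_num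
    · intro l hl
      rw [Set.uIoc_of_le (by norm_num : (0:ℝ) ≤ 2)] at hl
      rw [norm_mul, Complex.norm_real]
      have h1 : ‖χ l‖ ≤ 1 := by
        rw [Real.norm_eq_abs, abs_le]
        exact ⟨by linarith [(hχbd l).1], (hχbd l).2⟩
      have h2 := hexp_le w hw l (le_of_lt hl.1)
      calc ‖χ l‖ * ‖Complex.exp (w * l)‖ ≤ 1 * 1 := by
            exact mul_le_mul h1 h2 (norm_nonneg _) (by norm_num)
        _ = 1 := by norm_num
  -- refined bound
  have hEbd : ∀ w : ℂ, w ≠ 0 → w.re ≤ 0 → ‖F w + w⁻¹‖ ≤ 2 * M / ‖w‖ ^ 2 := by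
    intro w hw hwre
    rw [hF_def]
    simp only
    rw [helper_eq _ (hcw w) (hzw w), ibp_lemma χ hχ hχ0 hχ2 hder0 hder2 w hw]
    have hJ : ‖∫ l in (0:ℝ)..2, ((deriv (deriv χ) l : ℝ) : ℂ) * Complex.exp (w * l)‖ ≤ 2 * M := by
      have := intervalIntegral.norm_integral_le_of_norm_le_const
        (C := M) (f := fun l : ℝ => ((deriv (deriv χ) l : ℝ) : ℂ) * Complex.exp (w * l))
        (a := 0) (b := 2) ?_
      · calc ‖_‖ ≤ M * |2 - 0| := this
          _ = 2 * M := by rw [abs_of_nonneg]; ring; norm_num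
      · intro l hl
        rw [Set.uIoc_of_le (by norm_num : (0:ℝ) ≤ 2)] at hl
        rw [norm_mul, Complex.norm_real, Real.norm_eq_abs]
        have h1 : |deriv (deriv χ) l| ≤ M := hM' l ⟨le_of_lt hl.1, hl.2⟩
        have h2 := hexp_le w hwre l (le_of_lt hl.1)
        calc |deriv (deriv χ) l| * ‖Complex.exp (w * l)‖ ≤ M * 1 :=
              mul_le_mul h1 h2 (norm_nonneg _) (le_trans (abs_nonneg _) h1)
          _ = M := by ring
    have : -w⁻¹ + w⁻¹ * w⁻¹ * (∫ l in (0:ℝ)..2, ((deriv (deriv χ) l : ℝ) : ℂ)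
        * Complex.exp (w * l)) + w⁻¹
        = w⁻¹ * w⁻¹ * ∫ l in (0:ℝ)..2, ((deriv (deriv χ) l : ℝ) : ℂ) * Complex.exp (w * l) := by
      ring
    rw [this, norm_mul, norm_mul, norm_inv]
    calc ‖w‖⁻¹ * ‖w‖⁻¹ * ‖_‖ ≤ ‖w‖⁻¹ * ‖w‖⁻¹ * (2 * M) := by
          apply mul_le_mul_of_nonneg_left hJ
          positivity
      _ = 2 * M / ‖w‖ ^ 2 := by
          rw [div_eq_mul_inv, ← mul_inv, ← sq]
          ring
  -- choose the constant
  set C : ℝ := 16 * M + 18 with hC_def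
  refine ⟨C, by positivity, ?_⟩
  intro x y
  rcases eq_or_ne x 0 with hx | hx
  · simp only [k01, g4minus, hx, Real.sign_zero, Complex.ofReal_zero, zero_mul, sub_zero,
      norm_zero]
    positivity
  rcases eq_or_ne y 0 with hy | hy
  · simp only [k01, g4minus, hy, Real.sign_zero, Complex.ofReal_zero, zero_mul, mul_zero,
      sub_zero, norm_zero]
    positivity
  have hsx : ‖(Real.sign x : ℂ)‖ = 1 := by
    rcases hx.lt_or_gt with h | h
    · rw [Real.sign_of_neg h]; simp
    · rw [Real.sign_of_pos h]; simp
  have hsy : ‖(Real.sign y : ℂ)‖ = 1 := by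
    rcases hy.lt_or_gt with h | h
    · rw [Real.sign_of_neg h]; simp
    · rw [Real.sign_of_pos h]; simp
  unfold k01 g4minus
  set a := |x| with ha_def
  set b := |y| with hb_def
  have ha : 0 ≤ a := abs_nonneg x
  have hb : 0 ≤ b := abs_nonneg y
  set w1 : ℂ := Complex.I * ((a:ℂ) + b) with hw1_def
  set w2 : ℂ := Complex.I * ((a:ℂ) - b) with hw2_def
  set w3 : ℂ := -(a:ℂ) + Complex.I * b with hw3_def
  set w4 : ℂ := -(a:ℂ) - Complex.I * b with hw4_def
  have hre1 : w1.re ≤ 0 := by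
    rw [hw1_def]
    simp [Complex.mul_re]
  have hre2 : w2.re ≤ 0 := by
    rw [hw2_def]
    simp [Complex.mul_re]
  have hre3 : w3.re ≤ 0 := by
    rw [hw3_def]
    simp [Complex.add_re, Complex.mul_re, ha]
  have hre4 : w4.re ≤ 0 := by
    rw [hw4_def]
    simp [Complex.sub_re, Complex.mul_re, ha]
  have hsplit : (∫ l in Set.Ioi (0:ℝ),
        (χ l : ℂ) * FplusD (l * a) * (FplusD (l * b) - FminusD (l * b)))
      = F w1 - F w2 - F w3 + F w4 := by
    have heq : ∀ l : ℝ, (χ l : ℂ) * FplusD (l * a) * (FplusD (l * b) - FminusD (l * b))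
        = (χ l : ℂ) * Complex.exp (w1 * l) - (χ l : ℂ) * Complex.exp (w2 * l)
          - (χ l : ℂ) * Complex.exp (w3 * l) + (χ l : ℂ) * Complex.exp (w4 * l) := by
      intro l
      rw [mul_assoc, expand_pt l a b, hw1_def, hw2_def, hw3_def, hw4_def]
      ring
    have i12 : Integrable (fun l : ℝ => (χ l : ℂ) * Complex.exp (w1 * l)
        - (χ l : ℂ) * Complex.exp (w2 * l)) (volume.restrict (Set.Ioi 0)) :=
      (hintw w1).sub (hintw w2)
    have i123 : Integrable (fun l : ℝ => (χ l : ℂ) * Complex.exp (w1 * l)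
        - (χ l : ℂ) * Complex.exp (w2 * l) - (χ l : ℂ) * Complex.exp (w3 * l))
        (volume.restrict (Set.Ioi 0)) := i12.sub (hintw w3)
    have h2 := integral_sub (hintw w1) (hintw w2)
    have h3 := integral_sub i12 (hintw w3)
    have h4 := integral_add i123 (hintw w4)
    calc (∫ l in Set.Ioi (0:ℝ),
          (χ l : ℂ) * FplusD (l * a) * (FplusD (l * b) - FminusD (l * b)))
        = ∫ l in Set.Ioi (0:ℝ), ((χ l : ℂ) * Complex.exp (w1 * l)
            - (χ l : ℂ) * Complex.exp (w2 * l)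
            - (χ l : ℂ) * Complex.exp (w3 * l) + (χ l : ℂ) * Complex.exp (w4 * l)) := by
          exact integral_congr_ae (Filter.Eventually.of_forall fun l => heq l)
      _ = F w1 - F w2 - F w3 + F w4 := by
          rw [h4, h3, h2]
  rw [← mul_sub, norm_mul, norm_mul, hsx, hsy, one_mul, one_mul, hsplit]
  have hs_pos : (0:ℝ) < 1 + (a - b) ^ 2 := by positivity
  rcases lt_or_ge (|a - b|) 1 with hcase | hcase
  · -- near the diagonal: crude bounds
    have hif : ¬ (1 ≤ |a - b|) := not_le.mpr hcase
    rw [if_neg hif, if_neg hif]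
    set X : ℂ := Complex.I * (if 1 ≤ a + b then ((a + b : ℝ) : ℂ)⁻¹ else 0) with hX_def
    have hXbd : ‖X - Complex.I * 0 + 0‖ ≤ 1 := by
      rw [hX_def]
      simp only [mul_zero, sub_zero, add_zero]
      split_ifs with h
      · rw [norm_mul, Complex.norm_I, one_mul, norm_inv, Complex.norm_real, Real.norm_eq_abs,
          abs_of_nonneg (by positivity)]
        have := inv_anti₀ one_pos h
        simpa using this
      · simp
    have t1 := norm_sub_le (F w1 - F w2 - F w3 + F w4) (X - Complex.I * 0 + 0)
    have t2 := norm_add_le (F w1 - F w2 - F w3) (F w4)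
    have t3 := norm_sub_le (F w1 - F w2) (F w3)
    have t4 := norm_sub_le (F w1) (F w2)
    have b1 := hFbd w1 hre1
    have b2 := hFbd w2 hre2
    have b3 := hFbd w3 hre3
    have b4 := hFbd w4 hre4
    have hs2 : 1 + (a - b) ^ 2 ≤ 2 := by
      have : (a - b) ^ 2 < 1 := by
        rw [← sq_abs]
        nlinarith [abs_nonneg (a - b)]
      linarith
    have hinv : (2:ℝ)⁻¹ ≤ (1 + (a - b) ^ 2)⁻¹ := inv_anti₀ (by positivity) hs2
    calc ‖F w1 - F w2 - F w3 + F w4 - (X - Complex.I * 0 + 0)‖ ≤ 9 := by linarith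
      _ ≤ C * 2⁻¹ := by rw [hC_def]; nlinarith
      _ ≤ C * (1 + (a - b) ^ 2)⁻¹ := by
          apply mul_le_mul_of_nonneg_left hinv
          rw [hC_def]; positivity
  · -- away from the diagonal: integration by parts
    have habs : |a - b| ≤ a + b := abs_le.mpr ⟨by linarith, by linarith⟩
    have h1ab : 1 ≤ a + b := le_trans hcase habs
    rw [if_pos hcase, if_pos hcase, if_pos h1ab]
    have hab0 : a + b ≠ 0 := ne_of_gt (by linarith)
    have hamb0 : a - b ≠ 0 := by
      intro h
      rw [h] at hcase
      simp at hcase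
      linarith
    have hcast1 : ((a:ℂ) + b) = ((a + b : ℝ) : ℂ) := by push_cast; ring
    have hcast2 : ((a:ℂ) - b) = ((a - b : ℝ) : ℂ) := by push_cast; ring
    have hw1ne : w1 ≠ 0 := by
      rw [hw1_def, hcast1]
      exact mul_ne_zero Complex.I_ne_zero (Complex.ofReal_ne_zero.mpr hab0)
    have hw2ne : w2 ≠ 0 := by
      rw [hw2_def, hcast2]
      exact mul_ne_zero Complex.I_ne_zero (Complex.ofReal_ne_zero.mpr hamb0)
    have hw3ne : w3 ≠ 0 := by
      rw [hw3_def]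
      intro h
      have hre : (-(a:ℂ) + Complex.I * b).re = 0 := by rw [h]; simp
      have him : (-(a:ℂ) + Complex.I * b).im = 0 := by rw [h]; simp
      simp [Complex.add_re, Complex.add_im, Complex.mul_re, Complex.mul_im] at hre him
      rw [hre, him] at hab0
      simp at hab0
    have hw4ne : w4 ≠ 0 := by
      rw [hw4_def]
      intro h
      have hre : (-(a:ℂ) - Complex.I * b).re = 0 := by rw [h]; simp
      have him : (-(a:ℂ) - Complex.I * b).im = 0 := by rw [h]; simp
      simp [Complex.sub_re, Complex.sub_im, Complex.mul_re, Complex.mul_im] at hre him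
      rw [hre] at hab0
      rw [him] at hab0
      simp at hab0
    have hn1 : ‖w1‖ ^ 2 = (a + b) ^ 2 := by
      rw [hw1_def, hcast1, norm_mul, Complex.norm_I, one_mul, Complex.norm_real,
        Real.norm_eq_abs, sq_abs]
    have hn2 : ‖w2‖ ^ 2 = (a - b) ^ 2 := by
      rw [hw2_def, hcast2, norm_mul, Complex.norm_I, one_mul, Complex.norm_real,
        Real.norm_eq_abs, sq_abs]
    have hn3 : ‖w3‖ ^ 2 = a ^ 2 + b ^ 2 := by
      rw [hw3_def, Complex.sq_norm, Complex.normSq_apply]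
      simp [Complex.add_re, Complex.add_im, Complex.mul_re, Complex.mul_im]
      ring
    have hn4 : ‖w4‖ ^ 2 = a ^ 2 + b ^ 2 := by
      rw [hw4_def, Complex.sq_norm, Complex.normSq_apply]
      simp [Complex.sub_re, Complex.sub_im, Complex.mul_re, Complex.mul_im]
      ring
    have e1 : Complex.I * ((a + b : ℝ) : ℂ)⁻¹ = -w1⁻¹ := by
      rw [hw1_def, hcast1, mul_inv, Complex.inv_I]
      ring
    have e2 : Complex.I * ((a - b : ℝ) : ℂ)⁻¹ = -w2⁻¹ := by
      rw [hw2_def, hcast2, mul_inv, Complex.inv_I]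
      ring
    have e3 : ((a:ℂ) + Complex.I * b)⁻¹ = -w4⁻¹ := by
      rw [hw4_def, show -(a:ℂ) - Complex.I * b = -((a:ℂ) + Complex.I * b) from by ring, inv_neg]
      ring
    have e4 : ((a:ℂ) - Complex.I * b)⁻¹ = -w3⁻¹ := by
      rw [hw3_def, show -(a:ℂ) + Complex.I * b = -((a:ℂ) - Complex.I * b) from by ring, inv_neg]
      ring
    have hre_goal : F w1 - F w2 - F w3 + F w4
        - (Complex.I * ((a + b : ℝ) : ℂ)⁻¹ - Complex.I * ((a - b : ℝ) : ℂ)⁻¹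
          + (((a:ℂ) + Complex.I * b)⁻¹ - ((a:ℂ) - Complex.I * b)⁻¹))
        = (F w1 + w1⁻¹) - (F w2 + w2⁻¹) - (F w3 + w3⁻¹) + (F w4 + w4⁻¹) := by
      rw [e1, e2, e3, e4]
      ring
    rw [hre_goal]
    have s1 : 1 ≤ (a - b) ^ 2 := by
      rw [← sq_abs]
      nlinarith [abs_nonneg (a - b)]
    have key : ∀ w : ℂ, w ≠ 0 → w.re ≤ 0 → 1 + (a - b) ^ 2 ≤ 2 * ‖w‖ ^ 2 →
        ‖F w + w⁻¹‖ ≤ 4 * M / (1 + (a - b) ^ 2) := by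
      intro w hne hwre hnorm
      refine (hEbd w hne hwre).trans ?_
      have hwpos : 0 < ‖w‖ := norm_pos_iff.mpr hne
      rw [div_le_div_iff₀ (by positivity) hs_pos]
      nlinarith
    have k1 := key w1 hw1ne hre1 (by rw [hn1]; nlinarith [mul_nonneg ha hb])
    have k2 := key w2 hw2ne hre2 (by rw [hn2]; linarith)
    have k3 := key w3 hw3ne hre3 (by rw [hn3]; nlinarith [mul_nonneg ha hb])
    have k4 := key w4 hw4ne hre4 (by rw [hn4]; nlinarith [mul_nonneg ha hb])
    have t2 := norm_add_le ((F w1 + w1⁻¹) - (F w2 + w2⁻¹) - (F w3 + w3⁻¹)) (F w4 + w4⁻¹)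
    have t3 := norm_sub_le ((F w1 + w1⁻¹) - (F w2 + w2⁻¹)) (F w3 + w3⁻¹)
    have t4 := norm_sub_le (F w1 + w1⁻¹) (F w2 + w2⁻¹)
    calc ‖(F w1 + w1⁻¹) - (F w2 + w2⁻¹) - (F w3 + w3⁻¹) + (F w4 + w4⁻¹)‖
        ≤ 4 * (4 * M / (1 + (a - b) ^ 2)) := by linarith
      _ = 16 * M * (1 + (a - b) ^ 2)⁻¹ := by rw [div_eq_mul_inv]; ring
      _ ≤ C * (1 + (a - b) ^ 2)⁻¹ := by
          apply mul_le_mul_of_nonneg_right _ (by positivity)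
          rw [hC_def]
          linarith
end

section
/- Define g̃ : ℝ × ℝ → ℝ by g̃(x,y) = sgn(x)·sgn(y)·𝟙{| |x|−|y| | ≥ 2}·( (|x|+|y|)^{−1} − (|x|−|y|)^{−1} − 2|y|·(x²+y²)^{−1} ). Then for all x, b ∈ ℝ and all R > 0, |∫_{−R}^{R} g̃(x, y−b) dy| ≤ 4|b|. -/
open MeasureTheory

/-- The odd-in-`y` cancellation estimate from Proposition "example_2": for
`g̃(x,y) = sgn x · sgn y · 𝟙{||x|-|y||≥2} (1/(|x|+|y|) - 1/(|x|-|y|) - 2|y|/(x²+y²))`,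
one has `|∫_{-R}^R g̃(x, y-b) dy| ≤ 4|b|`. -/
theorem stmt18 (g : ℝ → ℝ → ℝ)
    (hg : g = fun x y => Real.sign x * Real.sign y *
      (if 2 ≤ |(|x| - |y|)| then
          (|x| + |y|)⁻¹ - (|x| - |y|)⁻¹ - 2 * |y| / (x ^ 2 + y ^ 2)
        else 0)) :
    ∀ (x b : ℝ) (R : ℝ), 0 < R →
      |∫ y in (-R)..R, g x (y - b)| ≤ 4 * |b| := by
  intro x b R hR
  -- |sign| ≤ 1
  have hsign : ∀ t : ℝ, |Real.sign t| ≤ 1 := by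
    intro t
    rcases Real.sign_apply_eq t with h | h | h <;> simp [h]
  -- pointwise bound
  have hbound : ∀ y, |g x y| ≤ 2 := by
    intro y
    rw [hg]
    simp only
    split_ifs with h
    · have hu : (0:ℝ) ≤ |x| := abs_nonneg x
      have hv : (0:ℝ) ≤ |y| := abs_nonneg y
      have hsum : (2:ℝ) ≤ |x| + |y| := by
        refine le_trans h ?_
        calc |(|x| - |y|)| ≤ |(|x|)| + |(|y|)| := abs_sub _ _
          _ = |x| + |y| := by rw [abs_abs, abs_abs]
      have h1 : |(|x| + |y|)⁻¹| ≤ 1/2 := by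
        rw [abs_inv, abs_of_nonneg (by linarith)]
        rw [inv_le_comm₀ (by linarith) (by norm_num)]
        linarith
      have h2 : |(|x| - |y|)⁻¹| ≤ 1/2 := by
        rw [abs_inv]
        rw [inv_le_comm₀ (by linarith) (by norm_num)]
        linarith
      have hden : (0:ℝ) < x ^ 2 + y ^ 2 := by
        nlinarith [sq_abs x, sq_abs y, sq_nonneg (|x| - |y|), hsum]
      have h3 : |2 * |y| / (x ^ 2 + y ^ 2)| ≤ 1 := by
        rw [abs_div, abs_of_nonneg (by positivity : (0:ℝ) ≤ 2 * |y|),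
          abs_of_pos hden, div_le_one hden]
        rcases le_abs.mp h with h' | h'
        · nlinarith [sq_abs x, sq_abs y]
        · nlinarith [sq_abs x, sq_abs y]
      calc |Real.sign x * Real.sign y *
            ((|x| + |y|)⁻¹ - (|x| - |y|)⁻¹ - 2 * |y| / (x ^ 2 + y ^ 2))|
          = |Real.sign x| * |Real.sign y| *
            |(|x| + |y|)⁻¹ - (|x| - |y|)⁻¹ - 2 * |y| / (x ^ 2 + y ^ 2)| := by
            rw [abs_mul, abs_mul]
        _ ≤ 1 * 1 * 2 := by
            have habs : |(|x| + |y|)⁻¹ - (|x| - |y|)⁻¹ - 2 * |y| / (x ^ 2 + y ^ 2)| ≤ 2 := by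
              calc |(|x| + |y|)⁻¹ - (|x| - |y|)⁻¹ - 2 * |y| / (x ^ 2 + y ^ 2)|
                  ≤ |(|x| + |y|)⁻¹ - (|x| - |y|)⁻¹| + |2 * |y| / (x ^ 2 + y ^ 2)| :=
                    abs_sub _ _
                _ ≤ (|(|x| + |y|)⁻¹| + |(|x| - |y|)⁻¹|) + |2 * |y| / (x ^ 2 + y ^ 2)| := by
                    gcongr; exact abs_sub _ _
                _ ≤ (1/2 + 1/2) + 1 := by gcongr
                _ = 2 := by norm_num
            apply mul_le_mul _ habs (abs_nonneg _) (by norm_num)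
            exact mul_le_mul (hsign x) (hsign y) (abs_nonneg _) zero_le_one
        _ = 2 := by norm_num
    · simp
  -- oddness
  have hodd : ∀ y, g x (-y) = - g x y := by
    intro y
    rw [hg]
    simp only [abs_neg, Real.sign_neg, neg_sq]
    ring
  -- measurability
  have hmeas : Measurable (g x) := by
    rw [hg]
    have hs : Measurable Real.sign := by
      unfold Real.sign
      exact Measurable.ite (measurableSet_lt measurable_id measurable_const)
        measurable_const
        (Measurable.ite (measurableSet_lt measurable_const measurable_id)
          measurable_const measurable_const)
    apply Measurable.mul
    · exact (measurable_const.mul (hs.comp measurable_id))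
    · apply Measurable.ite
      · exact measurableSet_le measurable_const
          ((measurable_const.sub measurable_abs).abs)
      · apply Measurable.sub
        apply Measurable.sub
        · exact (measurable_const.add measurable_abs).inv
        · exact (measurable_const.sub measurable_abs).inv
        · exact (measurable_const.mul measurable_abs).div
            (measurable_const.add (measurable_id.pow_const 2))
      · exact measurable_const
  -- interval integrability everywhere
  have hint : ∀ a c : ℝ, IntervalIntegrable (g x) volume a c := by
    intro a c
    rw [intervalIntegrable_iff]
    apply Measure.integrableOn_of_bounded measure_Ioc_lt_top.ne
      hmeas.aestronglyMeasurable
    filter_upwards with y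
    rw [Real.norm_eq_abs]
    exact hbound y
  -- odd integral over symmetric interval is zero
  have hzero : ∀ c : ℝ, (∫ y in (-c)..c, g x y) = 0 := by
    intro c
    have h1 : (∫ y in (0:ℝ)..c, g x (-y)) = ∫ y in (-c)..(0:ℝ), g x y := by
      simpa using intervalIntegral.integral_comp_neg (a := 0) (b := c) (f := g x)
    have h2 : (∫ y in (0:ℝ)..c, g x (-y)) = -∫ y in (0:ℝ)..c, g x y := by
      simp_rw [hodd]
      exact intervalIntegral.integral_neg
    have h3 : (∫ y in (-c)..(0:ℝ), g x y) + (∫ y in (0:ℝ)..c, g x y)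
        = ∫ y in (-c)..c, g x y :=
      intervalIntegral.integral_add_adjacent_intervals (hint _ _) (hint _ _)
    rw [← h3, ← h1, h2]
    ring
  -- change of variables
  have hcov : (∫ y in (-R)..R, g x (y - b)) = ∫ y in (-R - b)..(R - b), g x y := by
    simpa using intervalIntegral.integral_comp_sub_right (a := -R) (b := R) (f := g x) b
  have hsplit : (∫ y in (-R - b)..(R - b), g x y)
      = (∫ y in (-R - b)..(-(R - b)), g x y) + ∫ y in (-(R - b))..(R - b), g x y :=
    (intervalIntegral.integral_add_adjacent_intervals (hint _ _) (hint _ _)).symm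
  rw [hcov, hsplit, hzero (R - b), add_zero]
  have := intervalIntegral.norm_integral_le_of_norm_le_const
    (a := -R - b) (b := -(R - b)) (C := 2) (f := g x)
    (fun y _ => by rw [Real.norm_eq_abs]; exact hbound y)
  rw [Real.norm_eq_abs] at this
  calc |∫ y in (-R - b)..(-(R - b)), g x y| ≤ 2 * |(-(R - b)) - (-R - b)| := this
    _ = 4 * |b| := by
        rw [show (-(R - b)) - (-R - b) = 2 * b by ring, abs_mul]
        norm_num
        ring
end

section
/- Let ψ : ℝ → ℝ be defined by ψ(x) = 1/cosh(x) and V : ℝ → ℝ by V(x) = 20/cosh²(x) − 24/cosh⁴(x). Then ψ belongs to L²(ℝ), and for every x ∈ ℝ the fourth derivative of ψ satisfies ψ⁗(x) + V(x)·ψ(x) = ψ(x). -/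
open MeasureTheory Real Set

private lemma cosh_ne (x : ℝ) : Real.cosh x ≠ 0 := (Real.cosh_pos x).ne'

private lemma hd1 (x : ℝ) :
    HasDerivAt (fun x => 1 / Real.cosh x)
      (-Real.sinh x / Real.cosh x ^ 2) x := by
  have hc := Real.hasDerivAt_cosh x
  have h := ((hasDerivAt_const x (1:ℝ)).div hc (cosh_ne x))
  refine h.congr_deriv ?_
  field_simp
  ring

private lemma hd2 (x : ℝ) :
    HasDerivAt (fun x => -Real.sinh x / Real.cosh x ^ 2)
      (1 / Real.cosh x - 2 / Real.cosh x ^ 3) x := by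
  have hc := Real.hasDerivAt_cosh x
  have hs := Real.hasDerivAt_sinh x
  have h := (hs.neg.div (hc.pow 2) (pow_ne_zero 2 (cosh_ne x)))
  refine h.congr_deriv ?_
  have hs2 : Real.sinh x ^ 2 = Real.cosh x ^ 2 - 1 := by
    have := Real.cosh_sq x; linarith
  simp only [Pi.pow_apply, Pi.neg_apply, Nat.cast_ofNat]
  field_simp
  linear_combination (2 * Real.cosh x) * hs2

private lemma hd3 (x : ℝ) :
    HasDerivAt (fun x => 1 / Real.cosh x - 2 / Real.cosh x ^ 3)
      (-Real.sinh x / Real.cosh x ^ 2 + 6 * Real.sinh x / Real.cosh x ^ 4) x := by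
  have hc := Real.hasDerivAt_cosh x
  have h1 := ((hasDerivAt_const x (1:ℝ)).div hc (cosh_ne x))
  have h2 := ((hasDerivAt_const x (2:ℝ)).div (hc.pow 3) (pow_ne_zero 3 (cosh_ne x)))
  have h := h1.sub h2
  refine h.congr_deriv ?_
  simp only [Pi.pow_apply, Pi.neg_apply, Nat.cast_ofNat]
  field_simp
  ring

private lemma hd4 (x : ℝ) :
    HasDerivAt (fun x => -Real.sinh x / Real.cosh x ^ 2 + 6 * Real.sinh x / Real.cosh x ^ 4)
      (1 / Real.cosh x - 20 / Real.cosh x ^ 3 + 24 / Real.cosh x ^ 5) x := by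
  have hc := Real.hasDerivAt_cosh x
  have hs := Real.hasDerivAt_sinh x
  have h1 := (hs.neg.div (hc.pow 2) (pow_ne_zero 2 (cosh_ne x)))
  have h2 := ((hs.const_mul (6:ℝ)).div (hc.pow 4) (pow_ne_zero 4 (cosh_ne x)))
  have h := h1.add h2
  refine h.congr_deriv ?_
  have hs2 : Real.sinh x ^ 2 = Real.cosh x ^ 2 - 1 := by
    have := Real.cosh_sq x; linarith
  simp only [Pi.pow_apply, Pi.neg_apply, Nat.cast_ofNat]
  field_simp
  linear_combination (2 * Real.cosh x ^ 5 - 24 * Real.cosh x ^ 3) * hs2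

private lemma sq_integrable :
    Integrable (fun x : ℝ => (1 / Real.cosh x) ^ 2) (volume : Measure ℝ) := by
  have hcont : Continuous fun x : ℝ => (1 / Real.cosh x) ^ 2 :=
    (continuous_const.div Real.continuous_cosh fun x => cosh_ne x).pow 2
  have key : IntegrableOn (fun x : ℝ => (1 / Real.cosh x) ^ 2) (Ioi 0) volume := by
    have hg : IntegrableOn (fun x : ℝ => 4 * Real.exp (-2 * x)) (Ioi 0) volume :=
      (exp_neg_integrableOn_Ioi 0 (by norm_num : (0:ℝ) < 2)).const_mul 4
    refine Integrable.mono' hg hcont.aestronglyMeasurable.restrict ?_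
    filter_upwards [ae_restrict_mem measurableSet_Ioi] with x _
    rw [Real.norm_eq_abs, abs_of_nonneg (by positivity)]
    have h1 : Real.exp x / 2 ≤ Real.cosh x := by
      rw [Real.cosh_eq]
      have := (Real.exp_pos (-x)).le
      linarith
    have h2 : (0:ℝ) < Real.exp x / 2 := by positivity
    have h3 : (1 / Real.cosh x) ^ 2 ≤ (1 / (Real.exp x / 2)) ^ 2 := by
      gcongr
    calc (1 / Real.cosh x) ^ 2 ≤ (1 / (Real.exp x / 2)) ^ 2 := h3
      _ = 4 * Real.exp (-2 * x) := by
          have hx := Real.exp_pos x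
          rw [show (-2:ℝ) * x = -x + -x by ring, Real.exp_add, Real.exp_neg]
          field_simp
          ring
  have hIio : IntegrableOn (fun x : ℝ => (1 / Real.cosh x) ^ 2) (Iio 0) volume := by
    rw [← (Measure.measurePreserving_neg (volume : Measure ℝ)).integrableOn_comp_preimage
        (Homeomorph.neg ℝ).measurableEmbedding]
    simp only [Function.comp_def, Real.cosh_neg, neg_preimage, neg_Iio, neg_neg, neg_zero]
    exact key
  rw [← integrableOn_univ, ← @Iio_union_Ici _ _ (0 : ℝ), integrableOn_union,
    integrableOn_Ici_iff_integrableOn_Ioi]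
  exact ⟨hIio, key⟩

/-- The explicit embedded-eigenvalue example: `ψ = 1/cosh ∈ L²(ℝ)` and
`ψ'''' + V ψ = ψ` for `V(x) = 20/cosh²x - 24/cosh⁴x`. -/
theorem stmt19 (ψ : ℝ → ℝ) (hψ : ψ = fun x => 1 / Real.cosh x)
    (V : ℝ → ℝ) (hV : V = fun x => 20 / Real.cosh x ^ 2 - 24 / Real.cosh x ^ 4) :
    MemLp ψ 2 (volume : Measure ℝ) ∧
    ∀ x : ℝ, iteratedDeriv 4 ψ x + V x * ψ x = ψ x := by
  subst hψ hV
  constructor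
  · have hcont : Continuous fun x : ℝ => 1 / Real.cosh x :=
      continuous_const.div Real.continuous_cosh fun x => cosh_ne x
    exact (memLp_two_iff_integrable_sq hcont.aestronglyMeasurable).2 sq_integrable
  · have e1 : deriv (fun x => 1 / Real.cosh x)
        = fun x => -Real.sinh x / Real.cosh x ^ 2 := funext fun x => (hd1 x).deriv
    have e2 : deriv (fun x => -Real.sinh x / Real.cosh x ^ 2)
        = fun x => 1 / Real.cosh x - 2 / Real.cosh x ^ 3 := funext fun x => (hd2 x).deriv
    have e3 : deriv (fun x => 1 / Real.cosh x - 2 / Real.cosh x ^ 3)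
        = fun x => -Real.sinh x / Real.cosh x ^ 2 + 6 * Real.sinh x / Real.cosh x ^ 4 :=
      funext fun x => (hd3 x).deriv
    have e4 : deriv (fun x => -Real.sinh x / Real.cosh x ^ 2
          + 6 * Real.sinh x / Real.cosh x ^ 4)
        = fun x => 1 / Real.cosh x - 20 / Real.cosh x ^ 3 + 24 / Real.cosh x ^ 5 :=
      funext fun x => (hd4 x).deriv
    have h4 : iteratedDeriv 4 (fun x => 1 / Real.cosh x)
        = fun x => 1 / Real.cosh x - 20 / Real.cosh x ^ 3 + 24 / Real.cosh x ^ 5 := by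
      rw [show (4:ℕ) = 3 + 1 from rfl, iteratedDeriv_succ,
        show (3:ℕ) = 2 + 1 from rfl, iteratedDeriv_succ,
        show (2:ℕ) = 1 + 1 from rfl, iteratedDeriv_succ,
        iteratedDeriv_one, e1, e2, e3, e4]
    intro x
    rw [h4]
    have hc := cosh_ne x
    field_simp
    ring
end
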